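/- Let a > 0 and let (e_s)_{s∈ℕ} be an orthonormal basis of the real Hilbert space L²(ℝ, γ_a). For δ ∈ {+1, -1} and s ∈ ℕ define E_{δ,s} : ℝ → ℝ by E_{δ,s}(y) = √2 · e_s(δy) if δy > 0, and E_{δ,s}(y) = 0 otherwise. Then the doubly indexed family (E_{δ,s})_{δ∈{+1,-1}, s∈ℕ} is an orthonormal basis of L²(ℝ, λ_a). -/

import Mathlib

open MeasureTheory
open scoped ENNReal
open scoped NNReal

/-- The generalized Laplace measure `λ_a` on `ℝ`, with density
`l_a(y) = (1/(2Γ(a))) e^{-|y|} |y|^{a-1}` with respect to Lebesgue measure. -/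
noncomputable def laplaceM (a : ℝ) : Measure ℝ :=
  volume.withDensity fun y =>
    ENNReal.ofReal (1 / (2 * Real.Gamma a) * Real.exp (-|y|) * |y| ^ (a - 1))

/-- The gamma probability measure `γ_a` on `ℝ`, with density
`g_a(y) = (1/Γ(a)) e^{-y} y^{a-1}` on `(0,∞)` and `0` on `(-∞,0]`. -/
noncomputable def gammaM (a : ℝ) : Measure ℝ :=
  volume.withDensity fun y =>
    ENNReal.ofReal (if 0 < y then 1 / Real.Gamma a * Real.exp (-y) * y ^ (a - 1) else 0)

/-- The sign `±1` encoded by a boolean. -/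
def sgn (δ : Bool) : ℝ := if δ then 1 else -1

/-- The reflected-dilated family `E_{δ,s}(y) = √2 e_s(δ y)` on the half-line `δ y > 0`,
`0` elsewhere. -/
noncomputable def halfLineFun (e : ℕ → ℝ → ℝ) (p : Bool × ℕ) (y : ℝ) : ℝ :=
  if 0 < sgn p.1 * y then Real.sqrt 2 * e p.2 (sgn p.1 * y) else 0

namespace HLaux

noncomputable def ldensF (a : ℝ) (y : ℝ) : ℝ :=
  1 / (2 * Real.Gamma a) * Real.exp (-|y|) * |y| ^ (a - 1)

noncomputable def gdensF (a : ℝ) (y : ℝ) : ℝ :=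
  if 0 < y then 1 / Real.Gamma a * Real.exp (-y) * y ^ (a - 1) else 0

lemma laplaceM_eq (a : ℝ) :
    laplaceM a = volume.withDensity fun y => ENNReal.ofReal (ldensF a y) := rfl

lemma gammaM_eq (a : ℝ) :
    gammaM a = volume.withDensity fun y => ENNReal.ofReal (gdensF a y) := rfl

lemma ldensF_meas (a : ℝ) : Measurable (ldensF a) := by
  unfold ldensF
  fun_prop

lemma gdensF_meas (a : ℝ) : Measurable (gdensF a) := by
  unfold gdensF
  exact Measurable.ite (measurableSet_lt measurable_const measurable_id)
    (by fun_prop) measurable_const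

lemma ldensF_nonneg (a : ℝ) (ha : 0 < a) (y : ℝ) : 0 ≤ ldensF a y := by
  have hΓ : 0 < Real.Gamma a := Real.Gamma_pos_of_pos ha
  unfold ldensF
  positivity

lemma ldensF_neg (a : ℝ) (y : ℝ) : ldensF a (-y) = ldensF a y := by
  simp [ldensF, abs_neg]

lemma gdensF_pos (a : ℝ) (ha : 0 < a) {y : ℝ} (hy : 0 < y) : 0 < gdensF a y := by
  have hΓ : 0 < Real.Gamma a := Real.Gamma_pos_of_pos ha
  rw [gdensF, if_pos hy]
  positivity

lemma gdensF_nonneg (a : ℝ) (ha : 0 < a) (y : ℝ) : 0 ≤ gdensF a y := by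
  by_cases hy : 0 < y
  · exact (gdensF_pos a ha hy).le
  · rw [gdensF, if_neg hy]

lemma ofReal_half : ENNReal.ofReal (2⁻¹ : ℝ) = 2⁻¹ := by
  rw [ENNReal.ofReal_inv_of_pos (by norm_num : (0:ℝ) < 2), ENNReal.ofReal_ofNat]

lemma key_pointwise (a : ℝ) (ha : 0 < a) (G : ℝ → ℝ≥0∞) (y : ℝ) :
    ENNReal.ofReal (ldensF a y) * (if 0 < y then G y else 0)
      = 2⁻¹ * (ENNReal.ofReal (gdensF a y) * G y) := by
  by_cases hy : 0 < y
  · rw [if_pos hy, gdensF, if_pos hy, ldensF, abs_of_pos hy]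
    have h2 : 1 / (2 * Real.Gamma a) * Real.exp (-y) * y ^ (a - 1)
        = 2⁻¹ * (1 / Real.Gamma a * Real.exp (-y) * y ^ (a - 1)) := by ring
    rw [h2, ENNReal.ofReal_mul (by norm_num : (0:ℝ) ≤ 2⁻¹), mul_assoc, ofReal_half]
  · rw [if_neg hy, gdensF, if_neg hy, mul_zero]
    simp

lemma hneg_mp : MeasurePreserving (fun y : ℝ => -y) volume volume :=
  Measure.measurePreserving_neg _

lemma hneg_me : MeasurableEmbedding (fun y : ℝ => -y) :=
  (MeasurableEquiv.neg ℝ).measurableEmbedding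

lemma lintegral_half (a : ℝ) (ha : 0 < a) {c : ℝ} (hc : c = 1 ∨ c = -1)
    {G : ℝ → ℝ≥0∞} (hG : Measurable G) :
    ∫⁻ y, (if 0 < c * y then G (c * y) else 0) ∂(laplaceM a)
      = 2⁻¹ * ∫⁻ u, G u ∂(gammaM a) := by
  have hld : Measurable fun y => ENNReal.ofReal (ldensF a y) :=
    (ldensF_meas a).ennreal_ofReal
  have hgd : Measurable fun y => ENNReal.ofReal (gdensF a y) :=
    (gdensF_meas a).ennreal_ofReal
  have hite : Measurable fun y => if 0 < c * y then G (c * y) else 0 := by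
    exact Measurable.ite (measurableSet_lt measurable_const (by fun_prop))
      (hG.comp (by fun_prop)) measurable_const
  have hF : Measurable fun y => ENNReal.ofReal (ldensF a y) * (if 0 < y then G y else 0) :=
    hld.mul (Measurable.ite (measurableSet_lt measurable_const measurable_id)
      hG measurable_const)
  rw [laplaceM_eq, lintegral_withDensity_eq_lintegral_mul _ hld hite,
      gammaM_eq, lintegral_withDensity_eq_lintegral_mul _ hgd hG]
  simp only [Pi.mul_apply]
  rw [← lintegral_const_mul 2⁻¹ (f := fun y => ENNReal.ofReal (gdensF a y) * G y) (hgd.mul hG)]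
  have step : (∫⁻ y, ENNReal.ofReal (ldensF a y) * (if 0 < y then G y else 0)
      ∂(volume : Measure ℝ))
      = ∫⁻ y, 2⁻¹ * (ENNReal.ofReal (gdensF a y) * G y) ∂(volume : Measure ℝ) :=
    lintegral_congr fun y => key_pointwise a ha G y
  rcases hc with rfl | rfl
  · simpa only [one_mul] using step
  · calc ∫⁻ y, ENNReal.ofReal (ldensF a y) * (if 0 < -1 * y then G (-1 * y) else 0)
          ∂(volume : Measure ℝ)
        = ∫⁻ y, (fun y => ENNReal.ofReal (ldensF a y) * (if 0 < y then G y else 0)) (-y)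
            ∂(volume : Measure ℝ) := by
          refine lintegral_congr fun y => ?_
          simp only [neg_one_mul, ldensF_neg]
      _ = ∫⁻ y, ENNReal.ofReal (ldensF a y) * (if 0 < y then G y else 0)
            ∂(volume : Measure ℝ) := hneg_mp.lintegral_comp hF
      _ = _ := step

lemma real_key_pointwise (a : ℝ) (G : ℝ → ℝ) (y : ℝ) :
    ldensF a y * (if 0 < y then G y else 0) = 2⁻¹ * (gdensF a y * G y) := by
  by_cases hy : 0 < y
  · rw [if_pos hy, gdensF, if_pos hy, ldensF, abs_of_pos hy]; ring
  · rw [if_neg hy, gdensF, if_neg hy]; ring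

lemma integral_half (a : ℝ) (ha : 0 < a) {c : ℝ} (hc : c = 1 ∨ c = -1)
    (G : ℝ → ℝ) :
    ∫ y, (if 0 < c * y then G (c * y) else 0) ∂(laplaceM a)
      = 2⁻¹ * ∫ u, G u ∂(gammaM a) := by
  have hl : laplaceM a
      = volume.withDensity fun y => ((Real.toNNReal (ldensF a y) : ℝ≥0) : ℝ≥0∞) := rfl
  have hg : gammaM a
      = volume.withDensity fun y => ((Real.toNNReal (gdensF a y) : ℝ≥0) : ℝ≥0∞) := rfl
  have hlm : Measurable fun y => Real.toNNReal (ldensF a y) :=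
    (ldensF_meas a).real_toNNReal
  have hgm : Measurable fun y => Real.toNNReal (gdensF a y) :=
    (gdensF_meas a).real_toNNReal
  calc ∫ y, (if 0 < c * y then G (c * y) else 0) ∂(laplaceM a)
      = ∫ y, ldensF a y * (if 0 < c * y then G (c * y) else 0) ∂(volume : Measure ℝ) := by
        rw [hl, integral_withDensity_eq_integral_smul hlm]
        refine integral_congr_ae (Filter.Eventually.of_forall fun y => ?_)
        simp only [NNReal.smul_def, Real.coe_toNNReal _ (ldensF_nonneg a ha y), smul_eq_mul]
    _ = ∫ y, (fun y => ldensF a y * (if 0 < y then G y else 0)) (c * y)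
          ∂(volume : Measure ℝ) := by
        rcases hc with rfl | rfl
        · simp only [one_mul]
        · refine integral_congr_ae (Filter.Eventually.of_forall fun y => ?_)
          simp only [neg_one_mul, ldensF_neg]
    _ = ∫ y, ldensF a y * (if 0 < y then G y else 0) ∂(volume : Measure ℝ) := by
        rcases hc with rfl | rfl
        · simp only [one_mul]
        · simpa only [neg_one_mul] using
            hneg_mp.integral_comp hneg_me
              (fun y => ldensF a y * (if 0 < y then G y else 0))
    _ = ∫ y, 2⁻¹ * (gdensF a y * G y) ∂(volume : Measure ℝ) :=
        integral_congr_ae (Filter.Eventually.of_forall fun y => real_key_pointwise a G y)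
    _ = 2⁻¹ * ∫ y, gdensF a y * G y ∂(volume : Measure ℝ) := integral_const_mul _ _
    _ = 2⁻¹ * ∫ u, G u ∂(gammaM a) := by
        rw [hg, integral_withDensity_eq_integral_smul hgm]
        refine congrArg _ (integral_congr_ae (Filter.Eventually.of_forall fun y => ?_)).symm
        simp only [NNReal.smul_def, Real.coe_toNNReal _ (gdensF_nonneg a ha y), smul_eq_mul]

lemma gamma_ae (a : ℝ) (ha : 0 < a) {P : ℝ → Prop} (h : ∀ᵐ u ∂(gammaM a), P u) :
    ∀ᵐ u ∂(volume : Measure ℝ), 0 < u → P u := by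
  rw [gammaM_eq, ae_withDensity_iff (gdensF_meas a).ennreal_ofReal] at h
  filter_upwards [h] with u hu hpos
  exact hu (ENNReal.ofReal_pos.mpr (gdensF_pos a ha hpos)).ne'

lemma ae_comp_sign {c : ℝ} (hc : c = 1 ∨ c = -1) {P : ℝ → Prop}
    (h : ∀ᵐ u ∂(volume : Measure ℝ), P u) : ∀ᵐ y ∂(volume : Measure ℝ), P (c * y) := by
  rcases hc with rfl | rfl
  · simpa only [one_mul] using h
  · simpa only [neg_one_mul] using
      hneg_mp.quasiMeasurePreserving.tendsto_ae.eventually h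

lemma laplace_ac (a : ℝ) : laplaceM a ≪ (volume : Measure ℝ) :=
  withDensity_absolutelyContinuous _ _

lemma sgn_cases (b : Bool) : sgn b = 1 ∨ sgn b = -1 := by
  cases b <;> simp [sgn]

lemma sgn_sgn (b : Bool) (y : ℝ) : sgn b * (sgn b * y) = y := by
  cases b <;> simp [sgn]

lemma sgn_disj {b1 b2 : Bool} (y : ℝ) (hne : b1 ≠ b2) :
    ¬(0 < sgn b1 * y ∧ 0 < sgn b2 * y) := by
  rintro ⟨h1, h2⟩
  cases b1 <;> cases b2 <;> simp [sgn] at h1 h2 hne <;> linarith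

end HLaux

open HLaux

/-- If `(e_s)_{s∈ℕ}` is an orthonormal basis of `L²(ℝ, γ_a)`, then the doubly indexed family
`(E_{δ,s})`, with `E_{δ,s}(y) = √2 e_s(δ y)` for `δ y > 0` and `0` otherwise,
is an orthonormal basis of `L²(ℝ, λ_a)`. -/
theorem halfLineFun_orthonormalBasis_laplaceM (a : ℝ) (ha : 0 < a)
    (e : ℕ → ℝ → ℝ) (he : ∀ s, MemLp (e s) 2 (gammaM a))
    (hon : Orthonormal ℝ fun s => (he s).toLp (e s))
    (hdense : (Submodule.span ℝ
        (Set.range fun s => (he s).toLp (e s))).topologicalClosure = ⊤) :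
    ∃ hE : ∀ p : Bool × ℕ, MemLp (halfLineFun e p) 2 (laplaceM a),
      Orthonormal ℝ (fun p => (hE p).toLp (halfLineFun e p)) ∧
        (Submodule.span ℝ
          (Set.range fun p => (hE p).toLp (halfLineFun e p))).topologicalClosure = ⊤ := by
  classical
  -- measurable representatives
  set e' : ℕ → ℝ → ℝ := fun s => (he s).1.mk (e s) with he'def
  have hsm : ∀ s, StronglyMeasurable (e' s) := fun s => (he s).1.stronglyMeasurable_mk
  have heq : ∀ s, e s =ᵐ[gammaM a] e' s := fun s => (he s).1.ae_eq_mk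
  have he' : ∀ s, MemLp (e' s) 2 (gammaM a) := fun s => MemLp.ae_eq (heq s) (he s)
  have hvol_eq : ∀ s, ∀ᵐ u ∂(volume : Measure ℝ), 0 < u → e s u = e' s u :=
    fun s => gamma_ae a ha (heq s)
  -- a.e. equality of the doubled families
  have hEeq : ∀ p : Bool × ℕ, halfLineFun e p =ᵐ[laplaceM a] halfLineFun e' p := by
    intro p
    have h1 : ∀ᵐ y ∂(volume : Measure ℝ),
        0 < sgn p.1 * y → e p.2 (sgn p.1 * y) = e' p.2 (sgn p.1 * y) :=
      ae_comp_sign (sgn_cases p.1) (hvol_eq p.2)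
    refine (laplace_ac a).ae_le ?_
    filter_upwards [h1] with y hy
    unfold halfLineFun
    split_ifs with h
    · rw [hy h]
    · rfl
  have hEm : ∀ p : Bool × ℕ, Measurable (halfLineFun e' p) := by
    intro p
    unfold halfLineFun
    exact Measurable.ite (measurableSet_lt measurable_const (by fun_prop))
      (measurable_const.mul ((hsm p.2).measurable.comp (by fun_prop))) measurable_const
  have hsq : ∀ s, Integrable (fun u => e' s u ^ 2) (gammaM a) :=
    fun s => (memLp_two_iff_integrable_sq (hsm s).aestronglyMeasurable).mp (he' s)
  -- membership in L²(λ)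
  have hE' : ∀ p : Bool × ℕ, MemLp (halfLineFun e' p) 2 (laplaceM a) := by
    intro p
    rw [memLp_two_iff_integrable_sq (hEm p).aestronglyMeasurable]
    refine ⟨((hEm p).pow_const 2).aestronglyMeasurable, ?_⟩
    have hGm : Measurable fun u => ENNReal.ofReal ((Real.sqrt 2 * e' p.2 u) ^ 2) := by
      exact ((measurable_const.mul (hsm p.2).measurable).pow_const 2).ennreal_ofReal
    have hcalc : (∫⁻ y, ‖(halfLineFun e' p y) ^ 2‖ₑ ∂(laplaceM a))
        = 2⁻¹ * ∫⁻ u, ENNReal.ofReal ((Real.sqrt 2 * e' p.2 u) ^ 2) ∂(gammaM a) := by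
      rw [← lintegral_half a ha (sgn_cases p.1) hGm]
      refine lintegral_congr fun y => ?_
      unfold halfLineFun
      split_ifs with h
      · rw [Real.enorm_eq_ofReal (sq_nonneg _)]
      · simp
    have hG2 : (∫⁻ u, ENNReal.ofReal ((Real.sqrt 2 * e' p.2 u) ^ 2) ∂(gammaM a))
        = 2 * ∫⁻ u, ‖(e' p.2 u) ^ 2‖ₑ ∂(gammaM a) := by
      rw [← lintegral_const_mul 2 (by
        exact ((hsm p.2).measurable.pow_const 2).enorm)]
      refine lintegral_congr fun u => ?_
      rw [show (Real.sqrt 2 * e' p.2 u) ^ 2 = 2 * (e' p.2 u) ^ 2 by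
          rw [mul_pow, Real.sq_sqrt (by norm_num : (0:ℝ) ≤ 2)],
        ENNReal.ofReal_mul (by norm_num : (0:ℝ) ≤ 2),
        Real.enorm_eq_ofReal (sq_nonneg _), ENNReal.ofReal_ofNat]
    show HasFiniteIntegral _ (laplaceM a)
    rw [HasFiniteIntegral, hcalc, hG2, ← mul_assoc,
      ENNReal.inv_mul_cancel two_ne_zero ENNReal.ofNat_ne_top, one_mul]
    exact (hsq p.2).2
  have hE : ∀ p : Bool × ℕ, MemLp (halfLineFun e p) 2 (laplaceM a) :=
    fun p => MemLp.ae_eq (hEeq p).symm (hE' p)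
  have hinner : ∀ p q : Bool × ℕ,
      inner (𝕜 := ℝ) ((hE p).toLp (halfLineFun e p)) ((hE q).toLp (halfLineFun e q))
        = ∫ y, halfLineFun e' p y * halfLineFun e' q y ∂(laplaceM a) := by
    intro p q
    rw [L2.inner_def]
    refine integral_congr_ae ?_
    filter_upwards [(hE p).coeFn_toLp, (hE q).coeFn_toLp, hEeq p, hEeq q]
      with y h1 h2 h3 h4
    simp [h1, h2, h3, h4, RCLike.inner_apply, conj_trivial, mul_comm]
  have hgon : ∀ s t : ℕ, (∫ u, e' s u * e' t u ∂(gammaM a)) = if s = t then (1:ℝ) else 0 := by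
    intro s t
    have hright := orthonormal_iff_ite.mp hon s t
    rw [L2.inner_def] at hright
    rw [← hright]
    refine integral_congr_ae ?_
    filter_upwards [(he s).coeFn_toLp, (he t).coeFn_toLp, heq s, heq t]
      with u h1 h2 h3 h4
    simp [h1, h2, h3, h4, RCLike.inner_apply, conj_trivial, mul_comm]
  refine ⟨hE, ?_, ?_⟩
  · rw [orthonormal_iff_ite]
    intro p q
    rw [hinner p q]
    by_cases hb : p.1 = q.1
    · have hprod : (fun y => halfLineFun e' p y * halfLineFun e' q y)
          = fun y => if 0 < sgn p.1 * y
              then (fun u => Real.sqrt 2 * e' p.2 u * (Real.sqrt 2 * e' q.2 u)) (sgn p.1 * y)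
              else 0 := by
        funext y
        unfold halfLineFun
        rw [← hb]
        split_ifs with h
        · rfl
        · rw [mul_zero]
      have hhalf := integral_half a ha (sgn_cases p.1)
        (fun u => Real.sqrt 2 * e' p.2 u * (Real.sqrt 2 * e' q.2 u))
      rw [hprod, hhalf]
      have h2 : (∫ u, Real.sqrt 2 * e' p.2 u * (Real.sqrt 2 * e' q.2 u) ∂(gammaM a))
          = 2 * ∫ u, e' p.2 u * e' q.2 u ∂(gammaM a) := by
        rw [← integral_const_mul]
        refine integral_congr_ae (Filter.Eventually.of_forall fun u => ?_)
        have hs2 : Real.sqrt 2 * Real.sqrt 2 = 2 :=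
          Real.mul_self_sqrt (by norm_num : (0:ℝ) ≤ 2)
        calc Real.sqrt 2 * e' p.2 u * (Real.sqrt 2 * e' q.2 u)
            = Real.sqrt 2 * Real.sqrt 2 * (e' p.2 u * e' q.2 u) := by ring
          _ = 2 * (e' p.2 u * e' q.2 u) := by rw [hs2]
      rw [h2, ← mul_assoc]
      norm_num
      rw [hgon p.2 q.2]
      by_cases h : p.2 = q.2
      · rw [if_pos h, if_pos (Prod.ext_iff.mpr ⟨hb, h⟩)]
      · rw [if_neg h, if_neg (fun hh => h (by rw [hh]))]
    · have hzero : (fun y => halfLineFun e' p y * halfLineFun e' q y)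
          = fun _ => (0:ℝ) := by
        funext y
        unfold halfLineFun
        split_ifs with h1 h2
        · exact absurd ⟨h1, h2⟩ (sgn_disj y hb)
        all_goals simp
      rw [hzero, integral_zero, if_neg (fun h => hb (by rw [h]))]
  · -- density
    rw [Submodule.topologicalClosure_eq_top_iff, Submodule.eq_bot_iff]
    intro f hf
    have hperp : ∀ p : Bool × ℕ,
        inner (𝕜 := ℝ) ((hE p).toLp (halfLineFun e p)) f = 0 := fun p =>
      (Submodule.mem_orthogonal _ f).mp hf _ (Submodule.subset_span ⟨p, rfl⟩)
    set fm : ℝ → ℝ := (Lp.aestronglyMeasurable f).mk f with hfmdef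
    have hfmm : StronglyMeasurable fm := (Lp.aestronglyMeasurable f).stronglyMeasurable_mk
    have hfeq : ⇑f =ᵐ[laplaceM a] fm := (Lp.aestronglyMeasurable f).ae_eq_mk
    have hfL : MemLp fm 2 (laplaceM a) := MemLp.ae_eq hfeq (Lp.memLp f)
    have hfsq : Integrable (fun y => fm y ^ 2) (laplaceM a) :=
      (memLp_two_iff_integrable_sq hfmm.aestronglyMeasurable).mp hfL
    have hkey : ∀ b : Bool, ∀ᵐ y ∂(volume : Measure ℝ), 0 < sgn b * y → fm y = 0 := by
      intro b
      set F : ℝ → ℝ := fun u => fm (sgn b * u) with hFdef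
      have hFm : Measurable F := hfmm.measurable.comp (by fun_prop)
      -- F ∈ L²(γ)
      have hFL : MemLp F 2 (gammaM a) := by
        rw [memLp_two_iff_integrable_sq hFm.aestronglyMeasurable]
        refine ⟨(hFm.pow_const 2).aestronglyMeasurable, ?_⟩
        have hGm : Measurable fun u => ‖fm (sgn b * u) ^ 2‖ₑ := by
          exact ((hfmm.measurable.comp (by fun_prop)).pow_const 2).enorm
        have h1 := lintegral_half a ha (sgn_cases b) hGm
        have h2 : (∫⁻ u, ‖F u ^ 2‖ₑ ∂(gammaM a))
            = 2 * ∫⁻ y, (if 0 < sgn b * y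
                then ‖fm (sgn b * (sgn b * y)) ^ 2‖ₑ else 0) ∂(laplaceM a) := by
          rw [h1, ← mul_assoc, ENNReal.mul_inv_cancel two_ne_zero ENNReal.ofNat_ne_top,
            one_mul]
        have h3 : (∫⁻ y, (if 0 < sgn b * y
              then ‖fm (sgn b * (sgn b * y)) ^ 2‖ₑ else 0) ∂(laplaceM a))
            ≤ ∫⁻ y, ‖fm y ^ 2‖ₑ ∂(laplaceM a) := by
          refine lintegral_mono fun y => ?_
          rw [sgn_sgn]
          split_ifs
          · exact le_rfl
          · exact zero_le
        rw [HasFiniteIntegral, h2]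
        exact ENNReal.mul_lt_top ENNReal.ofNat_lt_top (lt_of_le_of_lt h3 hfsq.2)
      -- F is orthogonal to every e s
      have hFperp : ∀ s : ℕ, (∫ u, F u * e' s u ∂(gammaM a)) = 0 := by
        intro s
        have hih := integral_half a ha (sgn_cases b)
          (fun u => fm (sgn b * u) * e' s u)
        have hlhs : (∫ y, (if 0 < sgn b * y
              then (fun u => fm (sgn b * u) * e' s u) (sgn b * y) else 0) ∂(laplaceM a))
            = (Real.sqrt 2)⁻¹ *
              ∫ y, halfLineFun e' (b, s) y * fm y ∂(laplaceM a) := by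
          rw [← integral_const_mul]
          refine integral_congr_ae (Filter.Eventually.of_forall fun y => ?_)
          simp only [halfLineFun]
          split_ifs with h
          · have hs2 : Real.sqrt 2 ≠ 0 := by positivity
            rw [sgn_sgn]
            field_simp
          · simp
        have hzero : (∫ y, halfLineFun e' (b, s) y * fm y ∂(laplaceM a)) = 0 := by
          rw [← hperp (b, s), L2.inner_def]
          refine (integral_congr_ae ?_).symm
          filter_upwards [(hE (b, s)).coeFn_toLp, hEeq (b, s), hfeq] with y h1 h2 h3
          simp [h1, h2, h3, RCLike.inner_apply, conj_trivial, mul_comm]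
        rw [hlhs, hzero, mul_zero] at hih
        have := hih.symm
        rwa [mul_comm, ← eq_div_iff (by norm_num : (2:ℝ)⁻¹ ≠ 0), zero_div] at this
      -- hence toLp F = 0
      have hFinner : ∀ s : ℕ,
          inner (𝕜 := ℝ) (hFL.toLp F) ((he s).toLp (e s)) = 0 := by
        intro s
        rw [L2.inner_def, ← hFperp s]
        refine integral_congr_ae ?_
        filter_upwards [hFL.coeFn_toLp, (he s).coeFn_toLp, heq s] with u h1 h2 h3
        simp [h1, h2, h3, RCLike.inner_apply, conj_trivial, mul_comm]
      have hmem : hFL.toLp F ∈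
          (Submodule.span ℝ (Set.range fun s => (he s).toLp (e s)))ᗮ := by
        rw [Submodule.mem_orthogonal']
        intro u hu
        induction hu using Submodule.span_induction with
        | mem x hx => obtain ⟨s, rfl⟩ := hx; exact hFinner s
        | zero => exact inner_zero_right _
        | add x y _ _ hx hy => rw [inner_add_right, hx, hy, add_zero]
        | smul r x _ hx => rw [inner_smul_right, hx, mul_zero]
      rw [Submodule.topologicalClosure_eq_top_iff.mp hdense, Submodule.mem_bot] at hmem
      have hF0 : F =ᵐ[gammaM a] 0 := by
        have h := hFL.coeFn_toLp
        rw [hmem] at h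
        exact h.symm.trans (Lp.coeFn_zero ℝ 2 (gammaM a))
      have hvol : ∀ᵐ u ∂(volume : Measure ℝ), 0 < u → F u = 0 := gamma_ae a ha hF0
      have := ae_comp_sign (sgn_cases b) hvol
      filter_upwards [this] with y hy h
      have h2 : fm (sgn b * (sgn b * y)) = 0 := hy h
      rwa [sgn_sgn] at h2
    -- combine the two half-lines
    have h0 : ∀ᵐ y ∂(volume : Measure ℝ), fm y = 0 := by
      have hz : ∀ᵐ y ∂(volume : Measure ℝ), y ≠ 0 := by
        have hs : {y : ℝ | ¬ y ≠ 0} = {0} := by ext y; simp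
        rw [ae_iff, hs]
        exact Real.volume_singleton
      filter_upwards [hkey true, hkey false, hz] with y h1 h2 hy
      rcases lt_trichotomy y 0 with h | h | h
      · exact h2 (by simp [sgn]; linarith)
      · exact absurd h hy
      · exact h1 (by simp [sgn]; linarith)
    rw [Lp.eq_zero_iff_ae_eq_zero]
    exact hfeq.trans ((laplace_ac a).ae_le h0)
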